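/- arXiv:1601.00609 — 2 statements merged into one kernel-verified Lean document; each statement's English description precedes it below -/
import Mathlib

section
/- Let z ≥ 0 and let (δ_k) be a sequence of positive numbers. For each k let X_{δ_k,1}, X_{δ_k,2}, … be iid real random variables with mean 0 and variance σ²(δ_k), with sup_k σ²(δ_k) < ∞, and let S_{δ_k,n} denote the n-th partial sum. Then for every ε > 0 there exists T > 0 such that for all k, P( min_{n ≥ T/δ_k²} δ_k (S_{δ_k,n} + n δ_k) ≤ z ) < ε. -/
open MeasureTheory ProbabilityTheory Set
open Filter

section AuxUTBSW
variable {Ω : Type*} [MeasureSpace Ω] [IsProbabilityMeasure (ℙ : Measure Ω)]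

lemma aux_mart (X : ℕ → Ω → ℝ) (hm : ∀ i, Measurable (X i))
    (hindep : iIndepFun X ℙ)
    (hint : ∀ i, Integrable (X i) ℙ) (hmean : ∀ i, (∫ ω, X i ω) = 0) :
    Martingale (fun n => ∑ i ∈ Finset.range (n+1), X i)
      (Filtration.natural X fun i => (hm i).stronglyMeasurable) ℙ := by
  set ℱ := Filtration.natural X fun i => (hm i).stronglyMeasurable with hℱ
  have hXmeas : ∀ i n, i ≤ n → Measurable[ℱ n] (X i) := by
    intro i n hin
    have : MeasurableSpace.comap (X i) inferInstance ≤ ℱ n := by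
      rw [hℱ]
      exact le_iSup₂ (f := fun j (_ : j ≤ n) => MeasurableSpace.comap (X j) inferInstance) i hin
    exact measurable_iff_comap_le.2 this
  have hadp : ∀ n, StronglyMeasurable[ℱ n] (∑ i ∈ Finset.range (n+1), X i) := by
    intro n
    have h1 : Measurable[ℱ n] fun ω => ∑ i ∈ Finset.range (n+1), X i ω :=
      Finset.measurable_sum _ fun i hi =>
        hXmeas i n (Nat.lt_succ_iff.mp (Finset.mem_range.mp hi))
    have heq : (∑ i ∈ Finset.range (n+1), X i) = fun ω => ∑ i ∈ Finset.range (n+1), X i ω := by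
      funext ω; simp [Finset.sum_apply]
    rw [heq]
    exact h1.stronglyMeasurable
  constructor
  · intro n
    exact hadp n
  · intro i j hij
    show ℙ[∑ k ∈ Finset.range (j+1), X k | ℱ i] =ᵐ[ℙ] ∑ k ∈ Finset.range (i+1), X k
    have hsplit : (∑ k ∈ Finset.range (j+1), X k)
        = (∑ k ∈ Finset.range (i+1), X k) + (∑ k ∈ Finset.Ico (i+1) (j+1), X k) :=
      (Finset.sum_range_add_sum_Ico _ (Nat.succ_le_succ hij)).symm
    calc ℙ[∑ k ∈ Finset.range (j+1), X k | ℱ i]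
        =ᵐ[ℙ] ℙ[(∑ k ∈ Finset.range (i+1), X k) | ℱ i]
            + ℙ[(∑ k ∈ Finset.Ico (i+1) (j+1), X k) | ℱ i] := by
          rw [hsplit]
          exact condExp_add (integrable_finset_sum' _ fun k _ => hint k)
            (integrable_finset_sum' _ fun k _ => hint k) (ℱ i)
      _ =ᵐ[ℙ] (∑ k ∈ Finset.range (i+1), X k) + 0 := by
          apply EventuallyEq.add
          · exact Filter.EventuallyEq.of_eq (condExp_of_stronglyMeasurable (ℱ.le i) (hadp i)
              (integrable_finset_sum' _ fun k _ => hint k))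
          · have h1 : ℙ[(∑ k ∈ Finset.Ico (i+1) (j+1), X k) | ℱ i]
                =ᵐ[ℙ] ∑ k ∈ Finset.Ico (i+1) (j+1), ℙ[X k | ℱ i] :=
              condExp_finset_sum (fun k _ => hint k) (ℱ i)
            refine h1.trans ?_
            have h2 : ∀ k ∈ Finset.Ico (i+1) (j+1), ℙ[X k | ℱ i] =ᵐ[ℙ] 0 := by
              intro k hk
              have hik : i < k := (Finset.mem_Ico.mp hk).1
              have := hindep.condExp_natural_ae_eq_of_lt (fun i => (hm i).stronglyMeasurable) hik
              refine this.trans ?_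
              rw [hmean k]
              exact Filter.EventuallyEq.rfl
            have h3 : ∀ᵐ ω ∂ℙ, ∀ k ∈ Finset.Ico (i+1) (j+1), (ℙ[X k | ℱ i]) ω = 0 :=
              (ae_ball_iff (Finset.Ico (i+1) (j+1)).countable_toSet).2 h2
            filter_upwards [h3] with ω hω
            simp only [Finset.sum_apply, Pi.zero_apply]
            exact Finset.sum_eq_zero hω
      _ = (∑ k ∈ Finset.range (i+1), X k) := by simp

lemma aux_block (X : ℕ → Ω → ℝ) (hm : ∀ i, Measurable (X i))
    (hindep : iIndepFun X ℙ)
    (hL2 : ∀ i, MemLp (X i) 2 ℙ) (hmean : ∀ i, (∫ ω, X i ω) = 0)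
    {V : ℝ} (hvar : ∀ i, variance (X i) ℙ = V)
    (m : ℕ) {c : ℝ} (hc : 0 < c) :
    ℙ {ω | ∃ n : ℕ, n ≤ m + 1 ∧ c ≤ |∑ i ∈ Finset.range n, X i ω|}
      ≤ ENNReal.ofReal (Real.sqrt (((m:ℝ)+1) * V) / c) := by
  set M : ℕ → Ω → ℝ := fun n => ∑ i ∈ Finset.range (n+1), X i with hMdef
  have hint : ∀ i, Integrable (X i) ℙ := fun i => (hL2 i).integrable one_le_two
  have hM : Martingale M (Filtration.natural X fun i => (hm i).stronglyMeasurable) ℙ :=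
    aux_mart X hm hindep hint hmean
  have hsub : Submartingale (M ⊔ (-M)) (Filtration.natural X fun i => (hm i).stronglyMeasurable) ℙ :=
    hM.submartingale.sup hM.neg.submartingale
  have habs : ∀ n ω, (M ⊔ (-M)) n ω = |M n ω| := fun n ω => rfl
  have hnonneg : (0 : ℕ → Ω → ℝ) ≤ M ⊔ (-M) := by
    intro n ω
    rw [habs]
    exact abs_nonneg _
  -- Doob
  have hdoob := maximal_ineq hsub hnonneg (ε := c.toNNReal) m
  set D := {ω | (c.toNNReal : ℝ) ≤ (Finset.range (m+1)).sup' Finset.nonempty_range_add_one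
      fun k => (M ⊔ (-M)) k ω} with hD
  -- inclusion
  have hincl : {ω | ∃ n : ℕ, n ≤ m + 1 ∧ c ≤ |∑ i ∈ Finset.range n, X i ω|} ⊆ D := by
    rintro ω ⟨n, hnm, hcn⟩
    have hn0 : n ≠ 0 := by
      rintro rfl
      simp only [Finset.range_zero, Finset.sum_empty, abs_zero] at hcn
      exact absurd hcn (not_le.2 hc)
    obtain ⟨k, rfl⟩ := Nat.exists_eq_succ_of_ne_zero hn0
    have hk : k ∈ Finset.range (m+1) := Finset.mem_range.2 (Nat.lt_succ_of_le (Nat.succ_le_succ_iff.mp hnm))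
    refine le_trans ?_ (Finset.le_sup' (fun k => (M ⊔ (-M)) k ω) hk)
    rw [habs]
    rw [Real.coe_toNNReal _ hc.le]
    simpa only [hMdef, Finset.sum_apply] using hcn
  -- variance computations
  have hM2 : MemLp (M m) 2 ℙ := memLp_finset_sum' _ fun i _ => hL2 i
  have hmeanM : (∫ ω, M m ω) = 0 := by
    have : (∫ ω, M m ω) = ∑ i ∈ Finset.range (m+1), ∫ ω, X i ω := by
      rw [hMdef]
      simp only [Finset.sum_apply]
      exact integral_finset_sum _ fun i _ => hint i
    rw [this]
    exact Finset.sum_eq_zero fun i _ => hmean i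
  have hvarM : variance (M m) ℙ = ((m:ℝ)+1) * V := by
    rw [hMdef]
    rw [IndepFun.variance_sum (fun i _ => hL2 i)
      (fun i _ j _ hij => hindep.indepFun hij)]
    simp only [hvar, Finset.sum_const, Finset.card_range, nsmul_eq_mul]
    push_cast
    ring
  have hsqM : (∫ ω, (M m ω)^2) = ((m:ℝ)+1) * V := by
    have h := variance_eq_sub hM2
    rw [hmeanM] at h
    simp only [Pi.pow_apply] at h
    rw [← hvarM, h]
    ring
  have habs2 : MemLp (fun ω => |M m ω|) 2 ℙ := hM2.abs
  have hintabs : Integrable (fun ω => |M m ω|) ℙ := (hM2.integrable one_le_two).abs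
  have hkey : (∫ ω, |M m ω|) ≤ Real.sqrt (((m:ℝ)+1) * V) := by
    have h0 := variance_nonneg (fun ω => |M m ω|) ℙ
    rw [variance_eq_sub habs2] at h0
    have h1 : (∫ ω, |M m ω|)^2 ≤ ∫ ω, (M m ω)^2 := by
      have h2 : (∫ ω, (fun ω => |M m ω|) ω ^ 2) = ∫ ω, (M m ω)^2 := by
        congr 1
        funext ω
        exact sq_abs _
      simp only [Pi.pow_apply] at h0
      nlinarith [h0, h2]
    rw [hsqM] at h1
    have hV : (0:ℝ) ≤ V := (hvar 0) ▸ variance_nonneg _ _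
    exact (Real.le_sqrt (integral_nonneg fun ω => abs_nonneg _) (by positivity)).2 h1
  -- combine
  have hsetint : (∫ ω in D, (M ⊔ (-M)) m ω) ≤ Real.sqrt (((m:ℝ)+1) * V) := by
    refine le_trans (setIntegral_le_integral ?_ ?_) ?_
    · show Integrable (fun ω => (M ⊔ (-M)) m ω) ℙ
      simpa only [habs] using hintabs
    · exact Filter.Eventually.of_forall fun ω => hnonneg m ω
    · simpa only [habs] using hkey
  have hmulle : (ENNReal.ofReal c) * ℙ D ≤ ENNReal.ofReal (Real.sqrt (((m:ℝ)+1) * V)) := by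
    calc (ENNReal.ofReal c) * ℙ D = c.toNNReal • ℙ D := by
          rw [ENNReal.ofReal]; rfl
      _ ≤ ENNReal.ofReal (∫ ω in D, (M ⊔ (-M)) m ω) := hdoob
      _ ≤ ENNReal.ofReal (Real.sqrt (((m:ℝ)+1) * V)) := ENNReal.ofReal_le_ofReal hsetint
  refine le_trans (measure_mono hincl) ?_
  rw [ENNReal.ofReal_div_of_pos hc]
  rw [ENNReal.le_div_iff_mul_le (Or.inl (by simp [hc])) (Or.inl ENNReal.ofReal_ne_top)]
  rw [mul_comm]
  exact hmulle


end AuxUTBSW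

set_option maxHeartbeats 1600000

/-- Uniform tightness bound: for centered walks `S_{δ_k,n}` with uniformly bounded variances,
for every `ε > 0` there is `T` such that for all `k`,
`P(min_{n ≥ T/δ_k²} δ_k (S_{δ_k,n} + n δ_k) ≤ z) < ε`. -/
theorem uniform_tightness_bound_for_shifted_walks
    {Ω : Type*} [MeasureSpace Ω] [IsProbabilityMeasure (ℙ : Measure Ω)]
    (z : ℝ) (hz : 0 ≤ z) (δ : ℕ → ℝ) (hδ : ∀ k, 0 < δ k)
    (X : ℕ → ℕ → Ω → ℝ) (v : ℕ → ℝ)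
    (hmeas : ∀ k i, Measurable (X k i))
    (hindep : ∀ k, iIndepFun (X k) ℙ)
    (hident : ∀ k i, IdentDistrib (X k i) (X k 0) ℙ ℙ)
    (hL2 : ∀ k, MemLp (X k 0) 2 ℙ)
    (hmean : ∀ k, (∫ ω, X k 0 ω) = 0)
    (hvar : ∀ k, variance (X k 0) ℙ = v k)
    (hbdd : ∃ C : ℝ, ∀ k, v k ≤ C) :
    ∀ ε : ℝ, 0 < ε → ∃ T : ℝ, 0 < T ∧ ∀ k,
      (ℙ {ω | ∃ n : ℕ, T / (δ k) ^ 2 ≤ (n : ℝ) ∧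
          δ k * ((∑ i ∈ Finset.range n, X k i ω) + n * δ k) ≤ z}).toReal < ε := by
  obtain ⟨C, hC⟩ := hbdd
  have hC0 : (0:ℝ) ≤ C := le_trans ((hvar 0) ▸ variance_nonneg (X 0 0) ℙ) (hC 0)
  intro ε hε
  set Q : ℝ := 16 * Real.sqrt C / ε with hQdef
  have hQ0 : 0 ≤ Q := by positivity
  set T : ℝ := max (max 1 (2*z)) (Q^2+1) with hTdef
  have hT1 : (1:ℝ) ≤ T := le_trans (le_max_left _ _) (le_max_left _ _)
  have hTz : 2*z ≤ T := le_trans (le_max_right 1 (2*z)) (le_max_left _ _)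
  have hTQ : Q^2+1 ≤ T := le_max_right _ _
  have hT0 : (0:ℝ) < T := lt_of_lt_of_le one_pos hT1
  clear_value T
  refine ⟨T, hT0, fun k => ?_⟩
  set d : ℝ := δ k with hddef
  have hd : 0 < d := hδ k
  clear_value d
  have hL2' : ∀ i, MemLp (X k i) 2 ℙ := fun i => (hident k i).memLp_iff.mpr (hL2 k)
  have hmean' : ∀ i, (∫ ω, X k i ω) = 0 := fun i => ((hident k i).integral_eq).trans (hmean k)
  have hvar' : ∀ i, variance (X k i) ℙ = v k := fun i => ((hident k i).variance_eq).trans (hvar k)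
  have hv0 : 0 ≤ v k := (hvar k) ▸ variance_nonneg _ _
  set N : ℕ := ⌈T / d^2⌉₊ with hNdef
  have hN0 : 0 < N := Nat.ceil_pos.2 (div_pos hT0 (by positivity))
  have hN1 : (1:ℝ) ≤ (N:ℝ) := Nat.one_le_cast.2 hN0
  have hTN : T ≤ (N:ℝ) * d^2 := by
    have h := Nat.le_ceil (T / d^2)
    rw [div_le_iff₀ (by positivity)] at h
    exact h
  clear_value N
  set c : ℕ → ℝ := fun j => (N:ℝ) * 2^j * d - z/d with hcdef
  clear_value c
  have hpow1 : ∀ j:ℕ, (1:ℝ) ≤ 2^j := fun j => one_le_pow₀ one_le_two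
  have hchalf : ∀ j, (N:ℝ) * 2^j * d / 2 ≤ c j := by
    intro j
    have h1 : 2*z ≤ (N:ℝ) * 2^j * d^2 := by nlinarith [hpow1 j, hN1, sq_nonneg d, hTz, hTN]
    have h2 : z / d ≤ (N:ℝ) * 2^j * d / 2 := by
      rw [div_le_div_iff₀ hd two_pos]
      nlinarith [h1]
    simp only [hcdef]
    linarith
  have hcpos : ∀ j, 0 < c j := fun j => lt_of_lt_of_le (by positivity) (hchalf j)
  set A : ℕ → Set Ω := fun j => {ω | ∃ n : ℕ, n ≤ N * 2^(j+1) + 1 ∧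
      c j ≤ |∑ i ∈ Finset.range n, X k i ω|} with hAdef
  have hblock : ∀ j, ℙ (A j) ≤
      ENNReal.ofReal (Real.sqrt ((((N * 2^(j+1) : ℕ) : ℝ) + 1) * v k) / c j) := by
    intro j
    rw [hAdef]
    exact aux_block (X k) (hmeas k) (hindep k) hL2' hmean' hvar' (N * 2^(j+1)) (hcpos j)
  clear_value A
  set w : ℝ := (Real.sqrt 2)⁻¹ with hwdef
  have hs2pos : (0:ℝ) < Real.sqrt 2 := Real.sqrt_pos.2 two_pos
  have hsq2 : Real.sqrt 2 ^ 2 = 2 := Real.sq_sqrt two_pos.le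
  have hw0 : 0 ≤ w := by positivity
  have hs2gt1 : (1:ℝ) < Real.sqrt 2 := by nlinarith [hsq2, hs2pos]
  have hw1 : w < 1 := by
    rw [hwdef]
    exact inv_lt_one_of_one_lt₀ hs2gt1
  clear_value w
  set K : ℝ := 4 * Real.sqrt C / Real.sqrt T with hKdef
  have hsTpos : 0 < Real.sqrt T := Real.sqrt_pos.2 hT0
  have hK0 : 0 ≤ K := by positivity
  clear_value K
  have hbK : ∀ j, Real.sqrt ((((N * 2^(j+1) : ℕ) : ℝ) + 1) * v k) / c j ≤ K * w^j := by
    intro j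
    set sN := Real.sqrt N with hsNdef
    set s2j := (Real.sqrt 2)^j with hs2jdef
    have hsN : sN^2 = N := Real.sq_sqrt (by positivity)
    have hsNpos : 0 < sN := Real.sqrt_pos.2 (by exact_mod_cast hN0)
    have hs2j : s2j^2 = 2^j := by
      rw [hs2jdef, ← pow_mul, mul_comm j 2, pow_mul, hsq2]
    have hs2jpos : 0 < s2j := pow_pos hs2pos j
    have hsT : Real.sqrt T ≤ sN * d := by
      have h := Real.sqrt_le_sqrt hTN
      rwa [Real.sqrt_mul (by positivity) _, Real.sqrt_sq hd.le] at h
    have hsC : Real.sqrt C ^ 2 = C := Real.sq_sqrt hC0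
    have hstep1 : Real.sqrt ((((N * 2^(j+1) : ℕ) : ℝ) + 1) * v k)
        ≤ 2 * sN * s2j * Real.sqrt C := by
      have hcast : ((N * 2^(j+1) : ℕ) : ℝ) = (N:ℝ) * 2^(j+1) := by push_cast; ring
      have harg : ((((N * 2^(j+1) : ℕ) : ℝ) + 1) * v k) ≤ (2*sN*s2j*Real.sqrt C)^2 := by
        have hrhs : (2*sN*s2j*Real.sqrt C)^2 = 4 * N * 2^j * C := by
          have : (2*sN*s2j*Real.sqrt C)^2 = 4 * sN^2 * s2j^2 * (Real.sqrt C)^2 := by ring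
          rw [this, hsN, hs2j, hsC]
        rw [hrhs, hcast]
        have hN2j : (1:ℝ) ≤ (N:ℝ) * 2^j := by nlinarith [hN1, hpow1 j]
        have h1 : (N:ℝ) * 2^(j+1) + 1 ≤ 4 * N * 2^j := by
          rw [pow_succ]
          nlinarith [hN2j]
        have hb0 : (0:ℝ) ≤ 4 * N * 2^j := by positivity
        calc ((N:ℝ) * 2^(j+1) + 1) * v k
            ≤ (4 * N * 2^j) * v k := mul_le_mul_of_nonneg_right h1 hv0
          _ ≤ (4 * N * 2^j) * C := mul_le_mul_of_nonneg_left (hC k) hb0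
      calc Real.sqrt ((((N * 2^(j+1) : ℕ) : ℝ) + 1) * v k)
          ≤ Real.sqrt ((2*sN*s2j*Real.sqrt C)^2) := Real.sqrt_le_sqrt harg
        _ = 2*sN*s2j*Real.sqrt C := Real.sqrt_sq (by positivity)
    have hdenpos : (0:ℝ) < (N:ℝ) * 2^j * d / 2 := by positivity
    have hstep2 : Real.sqrt ((((N * 2^(j+1) : ℕ) : ℝ) + 1) * v k) / c j
        ≤ (2*sN*s2j*Real.sqrt C) / ((N:ℝ) * 2^j * d / 2) :=
      div_le_div₀ (by positivity) hstep1 hdenpos (hchalf j)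
    refine hstep2.trans ?_
    have hKw : K * w^j = 4*Real.sqrt C/(Real.sqrt T * s2j) := by
      rw [hKdef, hwdef, inv_pow, ← hs2jdef]
      field_simp
    rw [hKw, div_le_div_iff₀ hdenpos (by positivity)]
    have hmul := mul_le_mul_of_nonneg_left hsT
      (by positivity : (0:ℝ) ≤ 2 * Real.sqrt C * sN * s2j^2)
    calc 2*sN*s2j*Real.sqrt C * (Real.sqrt T * s2j)
        = 2 * Real.sqrt C * sN * s2j^2 * Real.sqrt T := by ring
      _ ≤ 2 * Real.sqrt C * sN * s2j^2 * (sN * d) := hmul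
      _ = 2 * Real.sqrt C * sN^2 * s2j^2 * d := by ring
      _ = 4 * Real.sqrt C * ((N:ℝ) * 2^j * d / 2) := by rw [hsN, hs2j]; ring
  have hincl : {ω | ∃ n : ℕ, T / d ^ 2 ≤ (n : ℝ) ∧
      d * ((∑ i ∈ Finset.range n, X k i ω) + n * d) ≤ z} ⊆ ⋃ j, A j := by
    rintro ω ⟨n, hn1, hn2⟩
    have hnN : N ≤ n := by rw [hNdef]; exact Nat.ceil_le.2 hn1
    set j := Nat.log 2 (n / N) with hjdef
    have hdiv : 0 < n / N := Nat.div_pos hnN hN0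
    have hjl : N * 2^j ≤ n := by
      have h1 : 2^j ≤ n / N := Nat.pow_log_le_self 2 hdiv.ne'
      calc N * 2^j ≤ N * (n / N) := Nat.mul_le_mul_left N h1
        _ = (n / N) * N := Nat.mul_comm _ _
        _ ≤ n := Nat.div_mul_le_self n N
    have hjr : n < N * 2^(j+1) := by
      have h2 : n / N < 2^(j+1) := Nat.lt_pow_succ_log_self (by norm_num) _
      have h3 := (Nat.div_lt_iff_lt_mul hN0).1 h2
      rw [Nat.mul_comm]
      exact h3
    refine Set.mem_iUnion.2 ⟨j, ?_⟩
    rw [hAdef]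
    refine ⟨n, by omega, ?_⟩
    have hS : (∑ i ∈ Finset.range n, X k i ω) ≤ z/d - n*d := by
      have h4 : ((∑ i ∈ Finset.range n, X k i ω) + n*d) ≤ z / d := by
        rw [le_div_iff₀ hd]
        nlinarith [hn2]
      linarith
    have hnr : (N:ℝ) * 2^j ≤ (n:ℝ) := by exact_mod_cast hjl
    have hcle : c j ≤ -(∑ i ∈ Finset.range n, X k i ω) := by
      have h5 : (N:ℝ) * 2^j * d ≤ (n:ℝ) * d := mul_le_mul_of_nonneg_right hnr hd.le
      simp only [hcdef]
      linarith
    exact le_trans hcle (neg_le_abs _)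
  have hsum : ℙ {ω | ∃ n : ℕ, T / d ^ 2 ≤ (n : ℝ) ∧
      d * ((∑ i ∈ Finset.range n, X k i ω) + n * d) ≤ z} ≤ ∑' j, ℙ (A j) :=
    (measure_mono hincl).trans (measure_iUnion_le A)
  have hsum2 : ∑' j, ℙ (A j) ≤ ∑' j : ℕ, ENNReal.ofReal (K * w^j) :=
    ENNReal.tsum_le_tsum fun j => (hblock j).trans (ENNReal.ofReal_le_ofReal (hbK j))
  have hgeom : Summable (fun j : ℕ => K * w^j) :=
    (summable_geometric_of_lt_one hw0 hw1).mul_left K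
  have hsum3 : ∑' j:ℕ, ENNReal.ofReal (K * w^j) = ENNReal.ofReal (K * (1-w)⁻¹) := by
    rw [← ENNReal.ofReal_tsum_of_nonneg (fun j => by positivity) hgeom]
    congr 1
    rw [tsum_mul_left, tsum_geometric_of_lt_one hw0 hw1]
  have hKlt : K * (1-w)⁻¹ < ε := by
    have h43 : (4/3 : ℝ) ≤ Real.sqrt 2 := (Real.le_sqrt (by norm_num) (by norm_num)).2 (by norm_num)
    have hw34 : w ≤ 3/4 := by
      rw [hwdef, show (3/4:ℝ) = (4/3)⁻¹ by norm_num]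
      exact inv_anti₀ (by norm_num) h43
    have hinv4 : (1-w)⁻¹ ≤ 4 := by
      rw [show (4:ℝ) = (4⁻¹)⁻¹ by norm_num]
      exact inv_anti₀ (by norm_num) (by linarith)
    have h4K : K * (1-w)⁻¹ ≤ 4 * K := by
      have := mul_le_mul_of_nonneg_left hinv4 hK0
      linarith
    have hQlt : Q < Real.sqrt T := by
      have h := Real.sqrt_lt_sqrt (by positivity) (show Q^2 < T by linarith)
      rwa [Real.sqrt_sq hQ0] at h
    have h4Klt : 4 * K < ε := by
      have h16 : 16 * Real.sqrt C < ε * Real.sqrt T := by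
        calc 16 * Real.sqrt C = ε * Q := by rw [hQdef]; field_simp
          _ < ε * Real.sqrt T := mul_lt_mul_of_pos_left hQlt hε
      rw [hKdef, show 4 * (4 * Real.sqrt C / Real.sqrt T) = 16 * Real.sqrt C / Real.sqrt T by ring,
        div_lt_iff₀ hsTpos]
      nlinarith [h16]
    linarith
  have hfinal : ℙ {ω | ∃ n : ℕ, T / d ^ 2 ≤ (n : ℝ) ∧
      d * ((∑ i ∈ Finset.range n, X k i ω) + n * d) ≤ z} < ENNReal.ofReal ε :=
    lt_of_le_of_lt (hsum.trans (hsum2.trans_eq hsum3)) ((ENNReal.ofReal_lt_ofReal_iff hε).2 hKlt)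
  exact (ENNReal.lt_ofReal_iff_toReal_lt (measure_ne_top _ _)).1 hfinal
end

section
/- Let S_n = X₁ + ⋯ + X_n be a random walk with iid real steps, R = inf{n ≥ 1 : S_n < 0} with generating function r(z) = E[z^R; R < ∞], and W = inf{n ≥ 1 : S_n ≥ 0} with generating function a(z) = E[z^W; W < ∞]. Then (1 − r(z))(1 − a(z)) = 1 − z for all real z with |z| < 1. -/
open MeasureTheory ProbabilityTheory Set

variable {Ω : Type*} [MeasureSpace Ω]

/-- The partial sums `S_n = X₁ + ⋯ + X_n` of a random walk. -/
def walkSum (X : ℕ → Ω → ℝ) (n : ℕ) (ω : Ω) : ℝ := ∑ i ∈ Finset.range n, X i ω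

/-- The (possibly defective) probability generating function `r(z) = E[z^R; R < ∞]` of the
first strictly descending ladder epoch `R = inf {n ≥ 1 : S_n < 0}`. -/
noncomputable def descLadderPGF (X : ℕ → Ω → ℝ) (z : ℝ) : ℝ :=
  ∑' n : ℕ, z ^ n * (ℙ {ω | 1 ≤ n ∧ walkSum X n ω < 0 ∧
      ∀ m, 1 ≤ m → m < n → 0 ≤ walkSum X m ω}).toReal

/-- The (possibly defective) probability generating function `a(z) = E[z^W; W < ∞]` of the
first weakly ascending ladder epoch `W = inf {n ≥ 1 : S_n ≥ 0}`. -/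
noncomputable def ascLadderPGF (X : ℕ → Ω → ℝ) (z : ℝ) : ℝ :=
  ∑' n : ℕ, z ^ n * (ℙ {ω | 1 ≤ n ∧ 0 ≤ walkSum X n ω ∧
      ∀ m, 1 ≤ m → m < n → walkSum X m ω < 0}).toReal

namespace LadderAux

/-! ### Generalities -/

lemma msetOf_imp {α : Type*} [MeasurableSpace α] (c : Prop) {s : α → Prop}
    (h : MeasurableSet {a | s a}) : MeasurableSet {a | c → s a} := by
  by_cases hc : c
  · simpa [hc] using h
  · simp [hc]

/-- extend a function on `Fin k` to `ℕ` by zero -/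
def extFin {k : ℕ} (y : Fin k → ℝ) (t : ℕ) : ℝ :=
  if h : t < k then y ⟨t, h⟩ else 0

lemma measurable_extFin {k : ℕ} (t : ℕ) : Measurable fun y : Fin k → ℝ => extFin y t := by
  unfold extFin
  split
  · exact measurable_pi_apply _
  · exact measurable_const

/-- extend a function on a `Finset ℕ` to `ℕ` by zero -/
def extSub {S : Finset ℕ} (y : S → ℝ) (t : ℕ) : ℝ :=
  if h : t ∈ S then y ⟨t, h⟩ else 0

lemma measurable_extSub {S : Finset ℕ} (t : ℕ) : Measurable fun y : S → ℝ => extSub y t := by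
  unfold extSub
  split
  · exact measurable_pi_apply _
  · exact measurable_const

/-- reversal of a sum -/
lemma rev_sum (f : ℕ → ℝ) {mm k : ℕ} (h : mm ≤ k) :
    ∑ t ∈ Finset.range mm, f (k - 1 - t) = ∑ i ∈ Finset.Ico (k - mm) k, f i := by
  rw [Finset.sum_Ico_eq_sum_range]
  have hk : k - (k - mm) = mm := by omega
  rw [hk, ← Finset.sum_range_reflect]
  refine Finset.sum_congr rfl fun t ht => ?_
  rw [Finset.mem_range] at ht
  congr 1
  omega

set_option linter.unusedSectionVars false

variable {Ω : Type*} [MeasureSpace Ω] [IsProbabilityMeasure (ℙ : Measure Ω)]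

/-! ### The basic events -/

/-- the walk stays nonnegative up to time `n` -/
def Uset (X : ℕ → Ω → ℝ) (n : ℕ) : Set Ω := {ω | ∀ m, 1 ≤ m → m ≤ n → 0 ≤ walkSum X m ω}

/-- the walk stays negative up to time `n` -/
def Vset (X : ℕ → Ω → ℝ) (n : ℕ) : Set Ω := {ω | ∀ m, 1 ≤ m → m ≤ n → walkSum X m ω < 0}

/-- `S_k < S_j` for all `j < k` (the value at `k` is a strict running minimum from the left) -/
def Lset (X : ℕ → Ω → ℝ) (k : ℕ) : Set Ω :=
  {ω | ∀ j, j < k → ∑ i ∈ Finset.Ico j k, X i ω < 0}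

/-- `S_j ≥ S_k` for all `k < j ≤ n` -/
def Rset (X : ℕ → Ω → ℝ) (k n : ℕ) : Set Ω :=
  {ω | ∀ j, k < j → j ≤ n → 0 ≤ ∑ i ∈ Finset.Ico k j, X i ω}

variable {X : ℕ → Ω → ℝ}

lemma measurable_walkSum (hmeas : ∀ i, Measurable (X i)) (n : ℕ) :
    Measurable (walkSum X n) :=
  Finset.measurable_sum _ fun i _ => hmeas i

lemma mUset (hmeas : ∀ i, Measurable (X i)) (n : ℕ) : MeasurableSet (Uset X n) := by
  have : Uset X n = ⋂ m, {ω | 1 ≤ m → m ≤ n → 0 ≤ walkSum X m ω} := by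
    ext ω; simp [Uset]
  rw [this]
  exact MeasurableSet.iInter fun m => msetOf_imp _ (msetOf_imp _
    (measurableSet_le measurable_const (measurable_walkSum hmeas m)))

lemma mVset (hmeas : ∀ i, Measurable (X i)) (n : ℕ) : MeasurableSet (Vset X n) := by
  have : Vset X n = ⋂ m, {ω | 1 ≤ m → m ≤ n → walkSum X m ω < 0} := by
    ext ω; simp [Vset]
  rw [this]
  exact MeasurableSet.iInter fun m => msetOf_imp _ (msetOf_imp _
    (measurableSet_lt (measurable_walkSum hmeas m) measurable_const))

lemma mLset (hmeas : ∀ i, Measurable (X i)) (k : ℕ) : MeasurableSet (Lset X k) := by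
  have : Lset X k = ⋂ j, {ω | j < k → ∑ i ∈ Finset.Ico j k, X i ω < 0} := by
    ext ω; simp [Lset]
  rw [this]
  exact MeasurableSet.iInter fun j => msetOf_imp _
    (measurableSet_lt (Finset.measurable_sum _ fun i _ => hmeas i) measurable_const)

lemma mRset (hmeas : ∀ i, Measurable (X i)) (k n : ℕ) : MeasurableSet (Rset X k n) := by
  have : Rset X k n = ⋂ j, {ω | k < j → j ≤ n → 0 ≤ ∑ i ∈ Finset.Ico k j, X i ω} := by
    ext ω; simp [Rset]
  rw [this]
  exact MeasurableSet.iInter fun j => msetOf_imp _ (msetOf_imp _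
    (measurableSet_le measurable_const (Finset.measurable_sum _ fun i _ => hmeas i)))

/-! ### The law of tuples of the steps -/

lemma law_pi (hmeas : ∀ i, Measurable (X i))
    (hindep : iIndepFun X ℙ)
    (hident : ∀ i, IdentDistrib (X i) (X 0) ℙ ℙ)
    {m : ℕ} (g : Fin m → ℕ) (hg : Function.Injective g) :
    Measure.map (fun ω (i : Fin m) => X (g i) ω) ℙ
      = Measure.pi fun _ : Fin m => Measure.map (X 0) ℙ := by
  classical
  refine (Measure.pi_eq fun s hs => ?_).symm
  set sets : ℕ → Set ℝ := fun j => if h : ∃ i, g i = j then s h.choose else Set.univ with hsets_def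
  have hsets : ∀ i : Fin m, sets (g i) = s i := by
    intro i
    have hex : ∃ i', g i' = g i := ⟨i, rfl⟩
    simp only [hsets_def, dif_pos hex]
    exact congrArg s (hg hex.choose_spec)
  have hmt : Measurable fun ω (i : Fin m) => X (g i) ω :=
    measurable_pi_lambda _ fun i => hmeas (g i)
  rw [Measure.map_apply hmt (MeasurableSet.univ_pi hs)]
  have hpre : (fun ω (i : Fin m) => X (g i) ω) ⁻¹' (Set.univ.pi s)
      = ⋂ j ∈ Finset.image g Finset.univ, X j ⁻¹' sets j := by
    ext ω
    simp only [Set.mem_preimage, Set.mem_univ_pi, Set.mem_iInter, Finset.mem_image,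
      Finset.mem_univ, true_and]
    constructor
    · rintro h j ⟨i, rfl⟩
      rw [hsets]
      exact h i
    · intro h i
      have := h (g i) ⟨i, rfl⟩
      rwa [hsets] at this
  have hms : ∀ j ∈ Finset.image g Finset.univ, MeasurableSet (sets j) := by
    intro j _
    simp only [hsets_def]
    split
    · exact hs _
    · exact MeasurableSet.univ
  rw [hpre, hindep.measure_inter_preimage_eq_mul _ hms,
    Finset.prod_image (fun i _ j _ h => hg h)]
  refine Finset.prod_congr rfl fun i _ => ?_
  rw [hsets, ← Measure.map_apply (hmeas _) (hs i), (hident (g i)).map_eq]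

lemma tuple_eq (hmeas : ∀ i, Measurable (X i))
    (hindep : iIndepFun X ℙ)
    (hident : ∀ i, IdentDistrib (X i) (X 0) ℙ ℙ)
    {m : ℕ} {g g' : Fin m → ℕ} (hg : Function.Injective g) (hg' : Function.Injective g')
    {C : Set (Fin m → ℝ)} (hC : MeasurableSet C) :
    ℙ ((fun ω (i : Fin m) => X (g i) ω) ⁻¹' C)
      = ℙ ((fun ω (i : Fin m) => X (g' i) ω) ⁻¹' C) := by
  rw [← Measure.map_apply (measurable_pi_lambda _ fun i => hmeas (g i)) hC,
      ← Measure.map_apply (measurable_pi_lambda _ fun i => hmeas (g' i)) hC,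
      law_pi hmeas hindep hident g hg, law_pi hmeas hindep hident g' hg']

/-! ### The three probabilistic identities -/

lemma left_law (hmeas : ∀ i, Measurable (X i))
    (hindep : iIndepFun X ℙ)
    (hident : ∀ i, IdentDistrib (X i) (X 0) ℙ ℙ) (k : ℕ) :
    ℙ (Lset X k) = ℙ (Vset X k) := by
  classical
  set C : Set (Fin k → ℝ) :=
    {y | ∀ mm, 1 ≤ mm → mm ≤ k → ∑ t ∈ Finset.range mm, extFin y t < 0} with hC_def
  have hC : MeasurableSet C := by
    have : C = ⋂ mm, {y : Fin k → ℝ | 1 ≤ mm → mm ≤ k →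
        ∑ t ∈ Finset.range mm, extFin y t < 0} := by
      ext y; simp [hC_def]
    rw [this]
    exact MeasurableSet.iInter fun mm => msetOf_imp _ (msetOf_imp _
      (measurableSet_lt (Finset.measurable_sum _ fun t _ => measurable_extFin t)
        measurable_const))
  have hgl : Function.Injective (fun i : Fin k => k - 1 - (i : ℕ)) := by
    intro i j hij
    have hi := i.2; have hj := j.2
    simp only at hij
    exact Fin.ext (by omega)
  have hgr : Function.Injective (fun i : Fin k => (i : ℕ)) := fun i j hij => Fin.ext hij
  have h1 : (fun ω (i : Fin k) => X (k - 1 - (i : ℕ)) ω) ⁻¹' C = Lset X k := by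
    ext ω
    have key : ∀ mm, mm ≤ k →
        ∑ t ∈ Finset.range mm, extFin (fun i : Fin k => X (k - 1 - (i : ℕ)) ω) t
          = ∑ i ∈ Finset.Ico (k - mm) k, X i ω := by
      intro mm hmm
      rw [← rev_sum (fun i => X i ω) hmm]
      refine Finset.sum_congr rfl fun t ht => ?_
      rw [Finset.mem_range] at ht
      rw [extFin, dif_pos (lt_of_lt_of_le ht hmm)]
    simp only [Set.mem_preimage, hC_def, Set.mem_setOf_eq, Lset]
    constructor
    · intro h j hj
      have h2 := h (k - j) (by omega) (by omega)
      rw [key _ (by omega)] at h2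
      have : k - (k - j) = j := by omega
      rwa [this] at h2
    · intro h mm h1 h2
      rw [key mm h2]
      exact h (k - mm) (by omega)
  have h2 : (fun ω (i : Fin k) => X ((i : ℕ)) ω) ⁻¹' C = Vset X k := by
    ext ω
    have key : ∀ mm, mm ≤ k →
        ∑ t ∈ Finset.range mm, extFin (fun i : Fin k => X ((i : ℕ)) ω) t
          = walkSum X mm ω := by
      intro mm hmm
      refine Finset.sum_congr rfl fun t ht => ?_
      rw [Finset.mem_range] at ht
      rw [extFin, dif_pos (lt_of_lt_of_le ht hmm)]
    simp only [Set.mem_preimage, hC_def, Set.mem_setOf_eq, Vset]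
    constructor
    · intro h mm h1 h2
      have := h mm h1 h2
      rwa [key mm h2] at this
    · intro h mm h1 h2
      rw [key mm h2]
      exact h mm h1 h2
  rw [← h1, ← h2]
  exact tuple_eq hmeas hindep hident hgl hgr hC

lemma right_law (hmeas : ∀ i, Measurable (X i))
    (hindep : iIndepFun X ℙ)
    (hident : ∀ i, IdentDistrib (X i) (X 0) ℙ ℙ) {k n : ℕ} (hk : k ≤ n) :
    ℙ (Rset X k n) = ℙ (Uset X (n - k)) := by
  classical
  set C : Set (Fin (n - k) → ℝ) :=
    {y | ∀ mm, 1 ≤ mm → mm ≤ n - k → 0 ≤ ∑ t ∈ Finset.range mm, extFin y t} with hC_def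
  have hC : MeasurableSet C := by
    have : C = ⋂ mm, {y : Fin (n - k) → ℝ | 1 ≤ mm → mm ≤ n - k →
        0 ≤ ∑ t ∈ Finset.range mm, extFin y t} := by
      ext y; simp [hC_def]
    rw [this]
    exact MeasurableSet.iInter fun mm => msetOf_imp _ (msetOf_imp _
      (measurableSet_le measurable_const
        (Finset.measurable_sum _ fun t _ => measurable_extFin t)))
  have hgl : Function.Injective (fun i : Fin (n - k) => k + (i : ℕ)) := by
    intro i j hij
    simp only at hij
    exact Fin.ext (by omega)
  have hgr : Function.Injective (fun i : Fin (n - k) => (i : ℕ)) := fun i j hij => Fin.ext hij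
  have h1 : (fun ω (i : Fin (n - k)) => X (k + (i : ℕ)) ω) ⁻¹' C = Rset X k n := by
    ext ω
    have key : ∀ mm, mm ≤ n - k →
        ∑ t ∈ Finset.range mm, extFin (fun i : Fin (n - k) => X (k + (i : ℕ)) ω) t
          = ∑ i ∈ Finset.Ico k (k + mm), X i ω := by
      intro mm hmm
      rw [Finset.sum_Ico_eq_sum_range]
      have : k + mm - k = mm := by omega
      rw [this]
      refine Finset.sum_congr rfl fun t ht => ?_
      rw [Finset.mem_range] at ht
      rw [extFin, dif_pos (lt_of_lt_of_le ht hmm)]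
    simp only [Set.mem_preimage, hC_def, Set.mem_setOf_eq, Rset]
    constructor
    · intro h j hj1 hj2
      have h2 := h (j - k) (by omega) (by omega)
      rw [key _ (by omega)] at h2
      have : k + (j - k) = j := by omega
      rwa [this] at h2
    · intro h mm h1 h2
      rw [key mm h2]
      exact h (k + mm) (by omega) (by omega)
  have h2 : (fun ω (i : Fin (n - k)) => X ((i : ℕ)) ω) ⁻¹' C = Uset X (n - k) := by
    ext ω
    have key : ∀ mm, mm ≤ n - k →
        ∑ t ∈ Finset.range mm, extFin (fun i : Fin (n - k) => X ((i : ℕ)) ω) t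
          = walkSum X mm ω := by
      intro mm hmm
      refine Finset.sum_congr rfl fun t ht => ?_
      rw [Finset.mem_range] at ht
      rw [extFin, dif_pos (lt_of_lt_of_le ht hmm)]
    simp only [Set.mem_preimage, hC_def, Set.mem_setOf_eq, Uset]
    constructor
    · intro h mm h1 h2
      have := h mm h1 h2
      rwa [key mm h2] at this
    · intro h mm h1 h2
      rw [key mm h2]
      exact h mm h1 h2
  rw [← h1, ← h2]
  exact tuple_eq hmeas hindep hident hgl hgr hC

lemma prod_split (hmeas : ∀ i, Measurable (X i))
    (hindep : iIndepFun X ℙ) (k n : ℕ) :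
    ℙ (Lset X k ∩ Rset X k n) = ℙ (Lset X k) * ℙ (Rset X k n) := by
  classical
  have hdisj : Disjoint (Finset.range k) (Finset.Ico k n) := by
    simp only [Finset.disjoint_left, Finset.mem_range, Finset.mem_Ico]
    omega
  have hIF := hindep.indepFun_finset (Finset.range k) (Finset.Ico k n) hdisj hmeas
  set sL : Set ((i : (Finset.range k : Finset ℕ)) → ℝ) :=
    {y | ∀ j, j < k → ∑ i ∈ Finset.Ico j k, extSub y i < 0} with hsL_def
  set sR : Set ((i : (Finset.Ico k n : Finset ℕ)) → ℝ) :=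
    {y | ∀ j, k < j → j ≤ n → 0 ≤ ∑ i ∈ Finset.Ico k j, extSub y i} with hsR_def
  have hmsL : MeasurableSet sL := by
    have : sL = ⋂ j, {y : (i : (Finset.range k : Finset ℕ)) → ℝ | j < k →
        ∑ i ∈ Finset.Ico j k, extSub y i < 0} := by
      ext y; simp [hsL_def]
    rw [this]
    exact MeasurableSet.iInter fun j => msetOf_imp _
      (measurableSet_lt (Finset.measurable_sum _ fun i _ => measurable_extSub i)
        measurable_const)
  have hmsR : MeasurableSet sR := by
    have : sR = ⋂ j, {y : (i : (Finset.Ico k n : Finset ℕ)) → ℝ | k < j → j ≤ n →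
        0 ≤ ∑ i ∈ Finset.Ico k j, extSub y i} := by
      ext y; simp [hsR_def]
    rw [this]
    exact MeasurableSet.iInter fun j => msetOf_imp _ (msetOf_imp _
      (measurableSet_le measurable_const
        (Finset.measurable_sum _ fun i _ => measurable_extSub i)))
  have hL : (fun a (i : (Finset.range k : Finset ℕ)) => X i a) ⁻¹' sL = Lset X k := by
    ext ω
    simp only [Set.mem_preimage, hsL_def, Set.mem_setOf_eq, Lset]
    constructor
    · intro h j hj
      have h2 := h j hj
      refine lt_of_eq_of_lt (Finset.sum_congr rfl fun i hi => ?_) h2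
      rw [Finset.mem_Ico] at hi
      rw [extSub, dif_pos (by simp only [Finset.mem_range]; omega)]
    · intro h j hj
      refine lt_of_eq_of_lt (Finset.sum_congr rfl fun i hi => ?_) (h j hj)
      rw [Finset.mem_Ico] at hi
      rw [extSub, dif_pos (by simp only [Finset.mem_range]; omega)]
  have hR : (fun a (i : (Finset.Ico k n : Finset ℕ)) => X i a) ⁻¹' sR = Rset X k n := by
    ext ω
    simp only [Set.mem_preimage, hsR_def, Set.mem_setOf_eq, Rset]
    constructor
    · intro h j hj1 hj2
      refine le_of_le_of_eq (h j hj1 hj2) (Finset.sum_congr rfl fun i hi => ?_)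
      rw [Finset.mem_Ico] at hi
      rw [extSub, dif_pos (by simp only [Finset.mem_Ico]; omega)]
    · intro h j hj1 hj2
      refine le_of_le_of_eq (h j hj1 hj2) (Finset.sum_congr rfl fun i hi => ?_)
      rw [Finset.mem_Ico] at hi
      rw [extSub, dif_pos (by simp only [Finset.mem_Ico]; omega)]
  rw [← hL, ← hR]
  exact hIF.measure_inter_preimage_eq_mul _ _ hmsL hmsR

/-! ### The decomposition by the first minimum -/

lemma cover (n : ℕ) : (⋃ k ∈ Finset.range (n + 1), (Lset X k ∩ Rset X k n)) = Set.univ := by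
  ext ω
  simp only [Set.mem_iUnion, Set.mem_univ, iff_true, Finset.mem_range]
  set F : ℕ → ℝ := fun j => walkSum X j ω with hF
  have hex : ∃ k, k ≤ n ∧ ∀ j, j ≤ n → F k ≤ F j := by
    obtain ⟨k, hk, hmin⟩ := Finset.exists_min_image (Finset.range (n + 1)) F ⟨0, by simp⟩
    rw [Finset.mem_range] at hk
    exact ⟨k, by omega, fun j hj => hmin j (Finset.mem_range.mpr (by omega))⟩
  classical
  set k0 := Nat.find hex with hk0
  obtain ⟨hk0n, hk0min⟩ := Nat.find_spec hex
  have hIco : ∀ j k : ℕ, j ≤ k → ∑ i ∈ Finset.Ico j k, X i ω = F k - F j := by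
    intro j k hjk
    rw [Finset.sum_Ico_eq_sub _ hjk]
    rfl
  refine ⟨k0, by omega, ?_, ?_⟩
  · intro j hj
    rw [hIco j k0 (le_of_lt hj), sub_neg]
    rcases lt_or_ge (F k0) (F j) with h | h
    · exact h
    · exfalso
      have hjP : j ≤ n ∧ ∀ j', j' ≤ n → F j ≤ F j' := by
        refine ⟨by omega, fun j' hj' => le_trans h (hk0min j' hj')⟩
      exact Nat.find_min hex hj hjP
  · intro j hj1 hj2
    rw [hIco k0 j (le_of_lt hj1), sub_nonneg]
    exact hk0min j hj2

lemma disj_aux {k k' n : ℕ} (h : k < k') (hk' : k' ≤ n) :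
    Disjoint (Lset X k ∩ Rset X k n) (Lset X k' ∩ Rset X k' n) := by
  rw [Set.disjoint_left]
  rintro ω ⟨_, hR⟩ ⟨hL', _⟩
  have h1 := hL' k h
  have h2 := hR k' h hk'
  linarith

lemma key_sum (hmeas : ∀ i, Measurable (X i))
    (hindep : iIndepFun X ℙ)
    (hident : ∀ i, IdentDistrib (X i) (X 0) ℙ ℙ) (n : ℕ) :
    ∑ k ∈ Finset.range (n + 1), (ℙ (Vset X k)).toReal * (ℙ (Uset X (n - k))).toReal = 1 := by
  have hpd : Set.PairwiseDisjoint ↑(Finset.range (n + 1))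
      (fun k => Lset X k ∩ Rset X k n) := by
    intro k hk k' hk' hne
    simp only [Finset.coe_range, Set.mem_Iio] at hk hk'
    rcases hne.lt_or_gt with h | h
    · exact disj_aux h (by omega)
    · exact (disj_aux h (by omega)).symm
  have hmeassets : ∀ k ∈ Finset.range (n + 1), MeasurableSet (Lset X k ∩ Rset X k n) :=
    fun k _ => (mLset hmeas k).inter (mRset hmeas k n)
  have hU : ℙ (⋃ k ∈ Finset.range (n + 1), (Lset X k ∩ Rset X k n))
      = ∑ k ∈ Finset.range (n + 1), ℙ (Lset X k ∩ Rset X k n) :=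
    measure_biUnion_finset hpd hmeassets
  rw [cover n, measure_univ] at hU
  have hterm : ∀ k ∈ Finset.range (n + 1),
      ℙ (Lset X k ∩ Rset X k n) = ℙ (Vset X k) * ℙ (Uset X (n - k)) := by
    intro k hk
    rw [Finset.mem_range] at hk
    rw [prod_split hmeas hindep k n, left_law hmeas hindep hident k,
      right_law hmeas hindep hident (show k ≤ n by omega)]
  rw [Finset.sum_congr rfl hterm] at hU
  have := congrArg ENNReal.toReal hU.symm
  rw [ENNReal.toReal_sum (fun k _ => by
    exact ENNReal.mul_ne_top (measure_ne_top _ _) (measure_ne_top _ _))] at this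
  rw [ENNReal.toReal_one] at this
  rw [← this]
  exact Finset.sum_congr rfl fun k _ => (ENNReal.toReal_mul).symm

/-! ### Analytic lemmas -/

lemma summable_aux {z : ℝ} (hz : |z| < 1) {u : ℕ → ℝ} {c : ℝ} (hub : ∀ n, |u n| ≤ c) :
    Summable fun n => z ^ n * u n := by
  refine Summable.of_norm_bounded
    ((summable_geometric_of_lt_one (abs_nonneg z) hz).mul_right c) fun n => ?_
  rw [Real.norm_eq_abs, abs_mul, abs_pow]
  exact mul_le_mul_of_nonneg_left (hub n) (by positivity)

lemma pgf_eq {z : ℝ} (hz : |z| < 1) {u p : ℕ → ℝ} (hu0 : u 0 = 1) (hub : ∀ n, |u n| ≤ 1)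
    (hp0 : p 0 = 0) (hp : ∀ n, p (n + 1) = u n - u (n + 1)) :
    1 - ∑' n, z ^ n * p n = (1 - z) * ∑' n, z ^ n * u n := by
  have hSu : Summable fun n => z ^ n * u n := summable_aux hz hub
  have hpb : ∀ n, |p n| ≤ 2 := by
    intro n
    cases n with
    | zero => rw [hp0]; norm_num
    | succ n =>
      rw [hp]
      calc |u n - u (n + 1)| ≤ |u n| + |u (n + 1)| := abs_sub _ _
        _ ≤ 2 := by have := hub n; have := hub (n + 1); linarith
  have hSp : Summable fun n => z ^ n * p n := summable_aux hz hpb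
  have hSu1 : Summable fun n => z ^ (n + 1) * u (n + 1) :=
    (summable_nat_add_iff 1).mpr hSu
  have h1 : ∑' n, z ^ n * p n = ∑' n, (z * (z ^ n * u n) - z ^ (n + 1) * u (n + 1)) := by
    rw [Summable.tsum_eq_zero_add hSp]
    simp only [pow_zero, hp0, mul_zero, one_mul, zero_add]
    refine tsum_congr fun n => ?_
    rw [hp]
    ring
  have h2 : ∑' n, (z * (z ^ n * u n) - z ^ (n + 1) * u (n + 1))
      = z * (∑' n, z ^ n * u n) - ∑' n, z ^ (n + 1) * u (n + 1) := by
    rw [Summable.tsum_sub (hSu.mul_left z) hSu1, tsum_mul_left]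
  have h3 : ∑' n, z ^ (n + 1) * u (n + 1) = (∑' n, z ^ n * u n) - 1 := by
    have := Summable.tsum_eq_zero_add hSu
    rw [pow_zero, hu0, mul_one] at this
    linarith
  rw [h1, h2, h3]
  ring

lemma cauchy_eq {z : ℝ} (hz : |z| < 1) {u v : ℕ → ℝ} (hub : ∀ n, |u n| ≤ 1)
    (hvb : ∀ n, |v n| ≤ 1)
    (hkey : ∀ n, ∑ k ∈ Finset.range (n + 1), v k * u (n - k) = 1) :
    (∑' n, z ^ n * u n) * (∑' n, z ^ n * v n) = (1 - z)⁻¹ := by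
  have hgeo : Summable fun n : ℕ => |z| ^ n := summable_geometric_of_lt_one (abs_nonneg z) hz
  have hnorm : ∀ (w : ℕ → ℝ), (∀ n, |w n| ≤ 1) → Summable fun n => ‖z ^ n * w n‖ := by
    intro w hwb
    refine Summable.of_nonneg_of_le (fun n => norm_nonneg _) (fun n => ?_) hgeo
    rw [Real.norm_eq_abs, abs_mul, abs_pow]
    calc |z| ^ n * |w n| ≤ |z| ^ n * 1 := by
          exact mul_le_mul_of_nonneg_left (hwb n) (by positivity)
      _ = |z| ^ n := mul_one _
  rw [tsum_mul_tsum_eq_tsum_sum_range_of_summable_norm (hnorm u hub) (hnorm v hvb)]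
  have hcoef : ∀ n : ℕ,
      ∑ k ∈ Finset.range (n + 1), (z ^ k * u k) * (z ^ (n - k) * v (n - k)) = z ^ n := by
    intro n
    have h1 : ∀ k ∈ Finset.range (n + 1),
        (z ^ k * u k) * (z ^ (n - k) * v (n - k)) = z ^ n * (u k * v (n - k)) := by
      intro k hk
      rw [Finset.mem_range] at hk
      have hzz : z ^ k * z ^ (n - k) = z ^ n := by
        rw [← pow_add]
        congr 1
        omega
      calc (z ^ k * u k) * (z ^ (n - k) * v (n - k))
          = (z ^ k * z ^ (n - k)) * (u k * v (n - k)) := by ring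
        _ = z ^ n * (u k * v (n - k)) := by rw [hzz]
    rw [Finset.sum_congr rfl h1, ← Finset.mul_sum]
    have hrefl := Finset.sum_range_reflect (fun k => v k * u (n - k)) (n + 1)
    have hre : ∑ k ∈ Finset.range (n + 1), u k * v (n - k)
        = ∑ k ∈ Finset.range (n + 1), v k * u (n - k) := by
      rw [← hrefl]
      refine Finset.sum_congr rfl fun j hj => ?_
      rw [Finset.mem_range] at hj
      have e1 : n + 1 - 1 - j = n - j := by omega
      rw [e1]
      have e2 : n - (n - j) = j := by omega
      rw [e2]
      ring
    rw [hre, hkey n, mul_one]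
  rw [tsum_congr hcoef]
  exact tsum_geometric_of_norm_lt_one (by rwa [Real.norm_eq_abs])

end LadderAux

/-- Duality (factorization) theorem: `(1 - r(z))(1 - a(z)) = 1 - z` for `|z| < 1`. -/
theorem ladder_epoch_duality
    [IsProbabilityMeasure (ℙ : Measure Ω)]
    (X : ℕ → Ω → ℝ)
    (hmeas : ∀ i, Measurable (X i))
    (hindep : iIndepFun X ℙ)
    (hident : ∀ i, IdentDistrib (X i) (X 0) ℙ ℙ) :
    ∀ z : ℝ, |z| < 1 →
      (1 - descLadderPGF X z) * (1 - ascLadderPGF X z) = 1 - z := by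
  intro z hz
  classical
  set u : ℕ → ℝ := fun n => (ℙ (LadderAux.Uset X n)).toReal with hu
  set v : ℕ → ℝ := fun n => (ℙ (LadderAux.Vset X n)).toReal with hv
  set p : ℕ → ℝ := fun n => (ℙ {ω | 1 ≤ n ∧ walkSum X n ω < 0 ∧
      ∀ m, 1 ≤ m → m < n → 0 ≤ walkSum X m ω}).toReal with hpdef
  set q : ℕ → ℝ := fun n => (ℙ {ω | 1 ≤ n ∧ 0 ≤ walkSum X n ω ∧
      ∀ m, 1 ≤ m → m < n → walkSum X m ω < 0}).toReal with hqdef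
  have htoReal_le_one : ∀ s : Set Ω, (ℙ s).toReal ≤ 1 := fun s => by
    calc (ℙ s).toReal ≤ (1 : ENNReal).toReal := ENNReal.toReal_mono ENNReal.one_ne_top prob_le_one
      _ = 1 := ENNReal.toReal_one
  have hub : ∀ n, |u n| ≤ 1 := fun n => by
    rw [abs_of_nonneg ENNReal.toReal_nonneg]
    exact htoReal_le_one _
  have hvb : ∀ n, |v n| ≤ 1 := fun n => by
    rw [abs_of_nonneg ENNReal.toReal_nonneg]
    exact htoReal_le_one _
  have hu0 : u 0 = 1 := by
    have h0 : LadderAux.Uset X 0 = Set.univ := by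
      ext ω
      simp only [LadderAux.Uset, Set.mem_setOf_eq, Set.mem_univ, iff_true]
      intro m h1 h2
      omega
    simp only [hu, h0, measure_univ, ENNReal.toReal_one]
  have hv0 : v 0 = 1 := by
    have h0 : LadderAux.Vset X 0 = Set.univ := by
      ext ω
      simp only [LadderAux.Vset, Set.mem_setOf_eq, Set.mem_univ, iff_true]
      intro m h1 h2
      omega
    simp only [hv, h0, measure_univ, ENNReal.toReal_one]
  have hp0 : p 0 = 0 := by
    have h0 : {ω : Ω | 1 ≤ 0 ∧ walkSum X 0 ω < 0 ∧
        ∀ m, 1 ≤ m → m < 0 → 0 ≤ walkSum X m ω} = ∅ := by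
      ext ω; simp
    simp only [hpdef, h0, measure_empty, ENNReal.toReal_zero]
  have hq0 : q 0 = 0 := by
    have h0 : {ω : Ω | 1 ≤ 0 ∧ 0 ≤ walkSum X 0 ω ∧
        ∀ m, 1 ≤ m → m < 0 → walkSum X m ω < 0} = ∅ := by
      ext ω; simp
    simp only [hqdef, h0, measure_empty, ENNReal.toReal_zero]
  have hpc : ∀ n, p (n + 1) = u n - u (n + 1) := by
    intro n
    have hEdef : {ω : Ω | 1 ≤ n + 1 ∧ walkSum X (n + 1) ω < 0 ∧
        ∀ m, 1 ≤ m → m < n + 1 → 0 ≤ walkSum X m ω}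
        = LadderAux.Uset X n ∩ {ω | walkSum X (n + 1) ω < 0} := by
      ext ω
      simp only [Set.mem_setOf_eq, Set.mem_inter_iff, LadderAux.Uset]
      constructor
      · rintro ⟨-, h1, h2⟩
        exact ⟨fun m hm1 hm2 => h2 m hm1 (by omega), h1⟩
      · rintro ⟨h2, h1⟩
        exact ⟨by omega, h1, fun m hm1 hm2 => h2 m hm1 (by omega)⟩
    have hsplit : LadderAux.Uset X n =
        (LadderAux.Uset X n ∩ {ω | walkSum X (n + 1) ω < 0}) ∪ LadderAux.Uset X (n + 1) := by
      ext ω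
      simp only [Set.mem_union, Set.mem_inter_iff, Set.mem_setOf_eq, LadderAux.Uset]
      constructor
      · intro h
        rcases lt_or_ge (walkSum X (n + 1) ω) 0 with hlt | hge
        · exact Or.inl ⟨h, hlt⟩
        · refine Or.inr fun m h1 h2 => ?_
          rcases Nat.lt_or_ge m (n + 1) with hm | hm
          · exact h m h1 (by omega)
          · have hmn : m = n + 1 := by omega
            rw [hmn]; exact hge
      · rintro (⟨h, -⟩ | h)
        · exact h
        · exact fun m h1 h2 => h m h1 (by omega)
    have hdisj : Disjoint (LadderAux.Uset X n ∩ {ω | walkSum X (n + 1) ω < 0})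
        (LadderAux.Uset X (n + 1)) := by
      rw [Set.disjoint_left]
      rintro ω ⟨-, h1⟩ h2
      have := h2 (n + 1) (by omega) le_rfl
      simp only [Set.mem_setOf_eq] at h1
      linarith
    have hadd := measure_union (μ := ℙ) hdisj (LadderAux.mUset hmeas (n + 1))
    rw [← hsplit] at hadd
    have htr := congrArg ENNReal.toReal hadd
    rw [ENNReal.toReal_add (measure_ne_top _ _) (measure_ne_top _ _)] at htr
    simp only [hpdef, hu]
    rw [hEdef]
    linarith [htr]
  have hqc : ∀ n, q (n + 1) = v n - v (n + 1) := by
    intro n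
    have hEdef : {ω : Ω | 1 ≤ n + 1 ∧ 0 ≤ walkSum X (n + 1) ω ∧
        ∀ m, 1 ≤ m → m < n + 1 → walkSum X m ω < 0}
        = LadderAux.Vset X n ∩ {ω | 0 ≤ walkSum X (n + 1) ω} := by
      ext ω
      simp only [Set.mem_setOf_eq, Set.mem_inter_iff, LadderAux.Vset]
      constructor
      · rintro ⟨-, h1, h2⟩
        exact ⟨fun m hm1 hm2 => h2 m hm1 (by omega), h1⟩
      · rintro ⟨h2, h1⟩
        exact ⟨by omega, h1, fun m hm1 hm2 => h2 m hm1 (by omega)⟩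
    have hsplit : LadderAux.Vset X n =
        (LadderAux.Vset X n ∩ {ω | 0 ≤ walkSum X (n + 1) ω}) ∪ LadderAux.Vset X (n + 1) := by
      ext ω
      simp only [Set.mem_union, Set.mem_inter_iff, Set.mem_setOf_eq, LadderAux.Vset]
      constructor
      · intro h
        rcases lt_or_ge (walkSum X (n + 1) ω) 0 with hlt | hge
        · refine Or.inr fun m h1 h2 => ?_
          rcases Nat.lt_or_ge m (n + 1) with hm | hm
          · exact h m h1 (by omega)
          · have hmn : m = n + 1 := by omega
            rw [hmn]; exact hlt
        · exact Or.inl ⟨h, hge⟩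
      · rintro (⟨h, -⟩ | h)
        · exact h
        · exact fun m h1 h2 => h m h1 (by omega)
    have hdisj : Disjoint (LadderAux.Vset X n ∩ {ω | 0 ≤ walkSum X (n + 1) ω})
        (LadderAux.Vset X (n + 1)) := by
      rw [Set.disjoint_left]
      rintro ω ⟨-, h1⟩ h2
      have := h2 (n + 1) (by omega) le_rfl
      simp only [Set.mem_setOf_eq] at h1
      linarith
    have hadd := measure_union (μ := ℙ) hdisj (LadderAux.mVset hmeas (n + 1))
    rw [← hsplit] at hadd
    have htr := congrArg ENNReal.toReal hadd
    rw [ENNReal.toReal_add (measure_ne_top _ _) (measure_ne_top _ _)] at htr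
    simp only [hqdef, hv]
    rw [hEdef]
    linarith [htr]
  have hr : descLadderPGF X z = ∑' n, z ^ n * p n := rfl
  have ha : ascLadderPGF X z = ∑' n, z ^ n * q n := rfl
  have h1 : 1 - descLadderPGF X z = (1 - z) * ∑' n, z ^ n * u n := by
    rw [hr]
    exact LadderAux.pgf_eq hz hu0 hub hp0 hpc
  have h2 : 1 - ascLadderPGF X z = (1 - z) * ∑' n, z ^ n * v n := by
    rw [ha]
    exact LadderAux.pgf_eq hz hv0 hvb hq0 hqc
  have hkey : ∀ n, ∑ k ∈ Finset.range (n + 1), v k * u (n - k) = 1 := fun n =>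
    LadderAux.key_sum hmeas hindep hident n
  have h3 := LadderAux.cauchy_eq hz hub hvb hkey
  have hz1 : (0 : ℝ) < 1 - z := by
    have := abs_lt.mp hz
    linarith
  rw [h1, h2]
  calc ((1 - z) * ∑' n, z ^ n * u n) * ((1 - z) * ∑' n, z ^ n * v n)
      = (1 - z) * (1 - z) * ((∑' n, z ^ n * u n) * (∑' n, z ^ n * v n)) := by ring
    _ = (1 - z) * (1 - z) * (1 - z)⁻¹ := by rw [h3]
    _ = 1 - z := by
        field_simp
end
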